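/- (Discriminant Test) Let D ⊆ ℝ², let p be an interior point of D, and let f : D → ℝ have continuous partial derivatives of first and second order in an open neighborhood of p. If ∇f(p) = 0 and the discriminant Δf(p) := f_xx(p)·f_yy(p) − f_xy(p)² is negative, then f has a strict saddle point at p. -/

import Mathlib

open Set Filter Topology

/-- `γ : [a, b] → D` is a regular path in `D`: it is continuous on `[a, b]`, maps `[a, b]`
into `D`, is differentiable on `(a, b)`, and its derivative is nonvanishing on `(a, b)`. -/
def IsRegularPath (D : Set (ℝ × ℝ)) (γ : ℝ → ℝ × ℝ) (a b : ℝ) : Prop :=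
  a < b ∧ ContinuousOn γ (Set.Icc a b) ∧ Set.MapsTo γ (Set.Icc a b) D ∧
    ∀ t ∈ Set.Ioo a b, DifferentiableAt ℝ γ t ∧ deriv γ t ≠ 0

/-- A function of one real variable has a strict local maximum at `t`. -/
def IsStrictLocalMax (g : ℝ → ℝ) (t : ℝ) : Prop :=
  ∀ᶠ s in 𝓝[≠] t, g s < g t

/-- A function of one real variable has a strict local minimum at `t`. -/
def IsStrictLocalMin (g : ℝ → ℝ) (t : ℝ) : Prop :=
  ∀ᶠ s in 𝓝[≠] t, g t < g s

/-- `f` has a saddle point at `p`: there are regular paths `γ₁, γ₂` in `D` passing through `p`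
and intersecting transversally at `p` (their tangent vectors at `p` are not multiples of each
other) such that `f` has a local maximum at `p` along `γ₁` and a local minimum at `p`
along `γ₂`. -/
def HasSaddleAt (D : Set (ℝ × ℝ)) (f : ℝ × ℝ → ℝ) (p : ℝ × ℝ) : Prop :=
  ∃ (a₁ b₁ a₂ b₂ t₁ t₂ : ℝ) (γ₁ γ₂ : ℝ → ℝ × ℝ),
    IsRegularPath D γ₁ a₁ b₁ ∧ IsRegularPath D γ₂ a₂ b₂ ∧
    t₁ ∈ Set.Ioo a₁ b₁ ∧ t₂ ∈ Set.Ioo a₂ b₂ ∧ γ₁ t₁ = p ∧ γ₂ t₂ = p ∧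
    (∀ c : ℝ, deriv γ₁ t₁ ≠ c • deriv γ₂ t₂) ∧
    (∀ c : ℝ, deriv γ₂ t₂ ≠ c • deriv γ₁ t₁) ∧
    IsLocalMax (f ∘ γ₁) t₁ ∧ IsLocalMin (f ∘ γ₂) t₂

/-- `f` has a strict saddle point at `p`: as for a saddle point, but with a strict local
maximum along `γ₁` and a strict local minimum along `γ₂`. -/
def HasStrictSaddleAt (D : Set (ℝ × ℝ)) (f : ℝ × ℝ → ℝ) (p : ℝ × ℝ) : Prop :=
  ∃ (a₁ b₁ a₂ b₂ t₁ t₂ : ℝ) (γ₁ γ₂ : ℝ → ℝ × ℝ),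
    IsRegularPath D γ₁ a₁ b₁ ∧ IsRegularPath D γ₂ a₂ b₂ ∧
    t₁ ∈ Set.Ioo a₁ b₁ ∧ t₂ ∈ Set.Ioo a₂ b₂ ∧ γ₁ t₁ = p ∧ γ₂ t₂ = p ∧
    (∀ c : ℝ, deriv γ₁ t₁ ≠ c • deriv γ₂ t₂) ∧
    (∀ c : ℝ, deriv γ₂ t₂ ≠ c • deriv γ₁ t₁) ∧
    IsStrictLocalMax (f ∘ γ₁) t₁ ∧ IsStrictLocalMin (f ∘ γ₂) t₂

/-- The second partial derivative `f_xx` at `p`. -/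
noncomputable def fxx (f : ℝ × ℝ → ℝ) (p : ℝ × ℝ) : ℝ :=
  fderiv ℝ (fun q => fderiv ℝ f q (1, 0)) p (1, 0)

/-- The mixed second partial derivative `f_xy` at `p`. -/
noncomputable def fxy (f : ℝ × ℝ → ℝ) (p : ℝ × ℝ) : ℝ :=
  fderiv ℝ (fun q => fderiv ℝ f q (1, 0)) p (0, 1)

/-- The second partial derivative `f_yy` at `p`. -/
noncomputable def fyy (f : ℝ × ℝ → ℝ) (p : ℝ × ℝ) : ℝ :=
  fderiv ℝ (fun q => fderiv ℝ f q (0, 1)) p (0, 1)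

/-- The Hessian form `Q_p(h) = f_xx(p) h₁² + 2 f_xy(p) h₁ h₂ + f_yy(p) h₂²` of `f` at `p`. -/
noncomputable def hessianForm (f : ℝ × ℝ → ℝ) (p h : ℝ × ℝ) : ℝ :=
  fxx f p * h.1 ^ 2 + 2 * fxy f p * h.1 * h.2 + fyy f p * h.2 ^ 2

namespace DiscrTestAux

lemma strictMax_aux {g g₁ : ℝ → ℝ} {q : ℝ}
    (hd : ∀ᶠ t in 𝓝 (0:ℝ), HasDerivAt g (g₁ t) t) (h0 : g₁ 0 = 0)
    (hq : HasDerivAt g₁ q 0) (hq0 : q < 0) :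
    ∀ᶠ s in 𝓝[≠] (0:ℝ), g s < g 0 := by
  have hslope : ∀ᶠ t in 𝓝[≠] (0:ℝ), g₁ t / t < 0 := by
    have h1 := hasDerivAt_iff_tendsto_slope.1 hq
    have h2 : ∀ᶠ t in 𝓝[≠] (0:ℝ), slope g₁ 0 t < 0 :=
      h1.eventually_lt_const hq0
    filter_upwards [h2] with t ht
    simpa [slope_def_field, h0, div_eq_inv_mul] using ht
  rw [eventually_nhdsWithin_iff] at hslope
  obtain ⟨δ, hδ, hball⟩ := Metric.eventually_nhds_iff.1 (hslope.and hd)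
  have hIoo : ∀ t ∈ Ioo (-(δ/2)) (δ/2), (t ≠ 0 → g₁ t / t < 0) ∧ HasDerivAt g (g₁ t) t := by
    intro t ht
    apply hball
    rw [Real.dist_eq, sub_zero]
    rcases ht with ⟨h1, h2⟩
    rw [abs_lt]; constructor <;> linarith
  have hanti : StrictAntiOn g (Icc 0 (δ/2 / 2)) := by
    apply strictAntiOn_of_deriv_neg (convex_Icc _ _)
    · intro x hx
      have hx' : x ∈ Ioo (-(δ/2)) (δ/2) := by
        rcases hx with ⟨h1, h2⟩; constructor <;> [linarith; linarith]
      exact ((hIoo x hx').2).continuousAt.continuousWithinAt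
    · intro x hx
      rw [interior_Icc] at hx
      have hx' : x ∈ Ioo (-(δ/2)) (δ/2) := by
        rcases hx with ⟨h1, h2⟩; constructor <;> [linarith; linarith]
      have hne : x ≠ 0 := ne_of_gt hx.1
      have := (hIoo x hx').1 hne
      rw [(hIoo x hx').2.deriv]
      rcases div_neg_iff.1 this with ⟨ha, hb⟩ | ⟨ha, hb⟩
      · linarith [hx.1]
      · exact ha
  have hmono : StrictMonoOn g (Icc (-(δ/2/2)) 0) := by
    apply strictMonoOn_of_deriv_pos (convex_Icc _ _)
    · intro x hx
      have hx' : x ∈ Ioo (-(δ/2)) (δ/2) := by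
        rcases hx with ⟨h1, h2⟩; constructor <;> [linarith; linarith]
      exact ((hIoo x hx').2).continuousAt.continuousWithinAt
    · intro x hx
      rw [interior_Icc] at hx
      have hx' : x ∈ Ioo (-(δ/2)) (δ/2) := by
        rcases hx with ⟨h1, h2⟩; constructor <;> [linarith; linarith]
      have hne : x ≠ 0 := ne_of_lt hx.2
      have := (hIoo x hx').1 hne
      rw [(hIoo x hx').2.deriv]
      rcases div_neg_iff.1 this with ⟨ha, hb⟩ | ⟨ha, hb⟩
      · linarith [hx.2]
      · linarith [hx.2]
  rw [eventually_nhdsWithin_iff]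
  have hmem : Ioo (-(δ/2/2)) (δ/2/2) ∈ 𝓝 (0:ℝ) := by
    apply Ioo_mem_nhds <;> [linarith; linarith]
  filter_upwards [hmem] with t ht htne
  rcases lt_or_gt_of_ne htne with h | h
  · have := hmono ⟨le_of_lt ht.1, le_of_lt h⟩ ⟨by linarith, le_refl 0⟩ h
    exact this
  · exact hanti ⟨le_refl 0, by linarith⟩ ⟨le_of_lt h, le_of_lt ht.2⟩ h

section
variable {U : Set (ℝ × ℝ)} {p : ℝ × ℝ} {f : ℝ × ℝ → ℝ}

lemma line_hasDerivAt (p v : ℝ × ℝ) (t : ℝ) :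
    HasDerivAt (fun s : ℝ => p + s • v) v t := by
  simpa using ((hasDerivAt_id t).smul_const v).const_add p

lemma eventually_hasFDerivAt (hU : IsOpen U) (hpU : p ∈ U) (hf : ContDiffOn ℝ 2 f U) :
    ∀ᶠ y in 𝓝 p, HasFDerivAt f (fderiv ℝ f y) y := by
  filter_upwards [hU.mem_nhds hpU] with y hy
  exact ((hf.contDiffAt (hU.mem_nhds hy)).differentiableAt two_ne_zero).hasFDerivAt

lemma snd_hasFDerivAt (hU : IsOpen U) (hpU : p ∈ U) (hf : ContDiffOn ℝ 2 f U) :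
    HasFDerivAt (fderiv ℝ f) (fderiv ℝ (fderiv ℝ f) p) p := by
  have h1 : ContDiffAt ℝ 2 f p := hf.contDiffAt (hU.mem_nhds hpU)
  exact ((h1.fderiv_right (m := 1) (by norm_num)).differentiableAt (by norm_num)).hasFDerivAt

lemma snd_symm (hU : IsOpen U) (hpU : p ∈ U) (hf : ContDiffOn ℝ 2 f U) (v w : ℝ × ℝ) :
    fderiv ℝ (fderiv ℝ f) p v w = fderiv ℝ (fderiv ℝ f) p w v :=
  second_derivative_symmetric_of_eventually (eventually_hasFDerivAt hU hpU hf)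
    (snd_hasFDerivAt hU hpU hf) v w

lemma apply_snd (hU : IsOpen U) (hpU : p ∈ U) (hf : ContDiffOn ℝ 2 f U) (u w : ℝ × ℝ) :
    fderiv ℝ (fun q => fderiv ℝ f q u) p w = fderiv ℝ (fderiv ℝ f) p w u := by
  have h := (snd_hasFDerivAt hU hpU hf).clm_apply (hasFDerivAt_const u p)
  rw [h.fderiv]
  simp

lemma snd_apply_hess (hU : IsOpen U) (hpU : p ∈ U) (hf : ContDiffOn ℝ 2 f U) (v : ℝ × ℝ) :
    fderiv ℝ (fderiv ℝ f) p v v = hessianForm f p v := by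
  have hv : v = v.1 • ((1:ℝ), (0:ℝ)) + v.2 • ((0:ℝ), (1:ℝ)) := by
    ext <;> simp
  have hsym := snd_symm hU hpU hf ((1:ℝ),(0:ℝ)) ((0:ℝ),(1:ℝ))
  have e11 : fderiv ℝ (fderiv ℝ f) p (1,0) (1,0) = fxx f p := by
    rw [fxx, apply_snd hU hpU hf]
  have e21 : fderiv ℝ (fderiv ℝ f) p (0,1) (1,0) = fxy f p := by
    rw [fxy, apply_snd hU hpU hf]
  have e12 : fderiv ℝ (fderiv ℝ f) p (1,0) (0,1) = fxy f p := by
    rw [hsym, e21]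
  have e22 : fderiv ℝ (fderiv ℝ f) p (0,1) (0,1) = fyy f p := by
    rw [fyy, apply_snd hU hpU hf]
  conv_lhs => rw [hv]
  simp only [map_add, map_smul, ContinuousLinearMap.add_apply, ContinuousLinearMap.smul_apply,
    ContinuousLinearMap.coe_smul', Pi.smul_apply, smul_eq_mul]
  rw [e11, e21, e12, e22, hessianForm]
  ring

lemma g1_hasDerivAt (hU : IsOpen U) (hpU : p ∈ U) (hf : ContDiffOn ℝ 2 f U) (v : ℝ × ℝ) :
    HasDerivAt (fun t : ℝ => fderiv ℝ f (p + t • v) v) (hessianForm f p v) 0 := by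
  have h1 : HasFDerivAt (fun q => fderiv ℝ f q v)
      ((fderiv ℝ (fderiv ℝ f) p).flip v) p := by
    have h := (snd_hasFDerivAt hU hpU hf).clm_apply (hasFDerivAt_const v p)
    convert h using 1
    all_goals first | rfl | simp
  rw [show p = p + (0:ℝ) • v by simp] at h1
  have h2 := h1.comp_hasDerivAt 0 (line_hasDerivAt p v 0)
  rw [← snd_apply_hess hU hpU hf v]
  simpa [Function.comp_def] using h2

lemma g_hasDerivAt (hU : IsOpen U) (hpU : p ∈ U) (hf : ContDiffOn ℝ 2 f U) (v : ℝ × ℝ) :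
    ∀ᶠ t in 𝓝 (0:ℝ), HasDerivAt (fun s : ℝ => f (p + s • v))
      (fderiv ℝ f (p + t • v) v) t := by
  have hc : Continuous (fun t : ℝ => p + t • v) := by continuity
  have : ∀ᶠ t in 𝓝 (0:ℝ), p + t • v ∈ U := by
    have := hc.continuousAt (x := 0)
    apply this.preimage_mem_nhds
    simpa using hU.mem_nhds hpU
  filter_upwards [this] with t ht
  have hfd : HasFDerivAt f (fderiv ℝ f (p + t • v)) (p + t • v) :=
    ((hf.contDiffAt (hU.mem_nhds ht)).differentiableAt two_ne_zero).hasFDerivAt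
  exact hfd.comp_hasDerivAt t (line_hasDerivAt p v t)
end

lemma indep_aux {v w : ℝ × ℝ} (h : v.1 * w.2 - v.2 * w.1 ≠ 0) :
    (∀ c : ℝ, v ≠ c • w) ∧ (∀ c : ℝ, w ≠ c • v) := by
  constructor
  · intro c hc
    apply h
    rw [hc]; simp; ring
  · intro c hc
    apply h
    rw [hc]; simp; ring

lemma exists_indef {A B C : ℝ} (h : A * C - B ^ 2 < 0) :
    ∃ v w : ℝ × ℝ, (∀ c : ℝ, v ≠ c • w) ∧ (∀ c : ℝ, w ≠ c • v) ∧
      A * v.1 ^ 2 + 2 * B * v.1 * v.2 + C * v.2 ^ 2 < 0 ∧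
      0 < A * w.1 ^ 2 + 2 * B * w.1 * w.2 + C * w.2 ^ 2 := by
  rcases lt_trichotomy A 0 with hA | hA | hA
  · -- A < 0 : v = (1,0) gives A < 0; w = (-B/A, 1) gives (AC-B²)/A > 0
    refine ⟨(1, 0), (-B/A, 1), ?_, ?_, ?_, ?_⟩
    · exact (indep_aux (v := (1,0)) (w := (-B/A,1)) (by norm_num)).1
    · exact (indep_aux (v := (1,0)) (w := (-B/A,1)) (by norm_num)).2
    · simpa using hA
    · have hA' : A ≠ 0 := ne_of_lt hA
      have : A * (-B/A) ^ 2 + 2 * B * (-B/A) * 1 + C * 1 ^ 2 = (A*C - B^2)/A := by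
        field_simp; ring
      rw [this]
      exact div_pos_of_neg_of_neg h hA
  · -- A = 0
    subst hA
    rcases lt_trichotomy C 0 with hC | hC | hC
    · refine ⟨(0, 1), (1, -B/C), ?_, ?_, ?_, ?_⟩
      · exact (indep_aux (v := ((0:ℝ),(1:ℝ))) (w := (1,-B/C)) (by norm_num)).1
      · exact (indep_aux (v := ((0:ℝ),(1:ℝ))) (w := (1,-B/C)) (by norm_num)).2
      · simpa using hC
      · have hC' : C ≠ 0 := ne_of_lt hC
        have hB : B ≠ 0 := by intro hB; rw [hB] at h; simp at h
        have : (0:ℝ) * 1 ^ 2 + 2 * B * 1 * (-B/C) + C * (-B/C) ^ 2 = -(B^2)/C := by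
          field_simp; ring
        rw [this]
        have : B^2 > 0 := by positivity
        rw [div_pos_iff]; right; constructor <;> [linarith; linarith]
    · subst hC
      have hB : B ≠ 0 := by intro hB; rw [hB] at h; simp at h
      rcases lt_or_gt_of_ne hB with hB' | hB'
      · refine ⟨(1, 1), (1, -1), ?_, ?_, ?_, ?_⟩
        · exact (indep_aux (v := ((1:ℝ),(1:ℝ))) (w := ((1:ℝ),(-1:ℝ))) (by norm_num)).1
        · exact (indep_aux (v := ((1:ℝ),(1:ℝ))) (w := ((1:ℝ),(-1:ℝ))) (by norm_num)).2
        · simp; linarith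
        · simp; linarith
      · refine ⟨(1, -1), (1, 1), ?_, ?_, ?_, ?_⟩
        · exact (indep_aux (v := ((1:ℝ),(-1:ℝ))) (w := ((1:ℝ),(1:ℝ))) (by norm_num)).1
        · exact (indep_aux (v := ((1:ℝ),(-1:ℝ))) (w := ((1:ℝ),(1:ℝ))) (by norm_num)).2
        · simp; linarith
        · simp; linarith
    · refine ⟨(1, -B/C), (0, 1), ?_, ?_, ?_, ?_⟩
      · exact (indep_aux (v := ((1:ℝ),-B/C)) (w := ((0:ℝ),(1:ℝ))) (by norm_num)).1
      · exact (indep_aux (v := ((1:ℝ),-B/C)) (w := ((0:ℝ),(1:ℝ))) (by norm_num)).2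
      · have hC' : C ≠ 0 := ne_of_gt hC
        have hB : B ≠ 0 := by intro hB; rw [hB] at h; simp at h
        have e : (0:ℝ) * (1:ℝ) ^ 2 + 2 * B * 1 * (-B/C) + C * (-B/C) ^ 2 = -(B^2)/C := by
          field_simp; ring
        calc (0:ℝ) * (1:ℝ)^2 + 2 * B * 1 * (-B/C) + C * (-B/C)^2 = -(B^2)/C := e
          _ < 0 := by
            rw [div_neg_iff]; right
            constructor <;> [nlinarith; linarith]
      · simpa using hC
  · -- A > 0 : w = (1,0), v = (-B/A, 1)
    refine ⟨(-B/A, 1), (1, 0), ?_, ?_, ?_, ?_⟩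
    · exact (indep_aux (v := (-B/A,(1:ℝ))) (w := ((1:ℝ),(0:ℝ))) (by norm_num)).1
    · exact (indep_aux (v := (-B/A,(1:ℝ))) (w := ((1:ℝ),(0:ℝ))) (by norm_num)).2
    · have hA' : A ≠ 0 := ne_of_gt hA
      have e : A * (-B/A) ^ 2 + 2 * B * (-B/A) * 1 + C * 1 ^ 2 = (A*C - B^2)/A := by
        field_simp; ring
      calc A * (-B/A)^2 + 2 * B * (-B/A) * 1 + C * 1^2 = (A*C-B^2)/A := e
        _ < 0 := div_neg_of_neg_of_pos h hA
    · simpa using hA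

end DiscrTestAux

/-- Discriminant Test: if `f` has continuous first and second order partial derivatives on
an open neighborhood `U ⊆ D` of the interior point `p`, `∇f(p) = 0`, and the discriminant
`Δf(p) = f_xx(p)·f_yy(p) - f_xy(p)²` is negative, then `f` has a strict saddle point at `p`. -/
theorem discriminant_test (D U : Set (ℝ × ℝ)) (p : ℝ × ℝ) (f : ℝ × ℝ → ℝ)
    (hp : p ∈ interior D) (hU : IsOpen U) (hpU : p ∈ U) (hUD : U ⊆ D)
    (hf : ContDiffOn ℝ 2 f U) (hgrad : fderiv ℝ f p = 0)
    (hdisc : fxx f p * fyy f p - fxy f p ^ 2 < 0) :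
    HasStrictSaddleAt D f p := by
  classical
  obtain ⟨v, w, hvw, hwv, hQv, hQw⟩ := DiscrTestAux.exists_indef hdisc
  have hQv' : hessianForm f p v < 0 := hQv
  have hQw' : 0 < hessianForm f p w := hQw
  have hvne : v ≠ 0 := by
    intro hv
    rw [hv] at hQv'
    simp [hessianForm] at hQv'
  have hwne : w ≠ 0 := by
    intro hw
    rw [hw] at hQw'
    simp [hessianForm] at hQw'
  -- find δ so that the segments stay in U
  have hmem : ∀ u : ℝ × ℝ, ∃ δ > (0:ℝ), ∀ t : ℝ, |t| ≤ δ → p + t • u ∈ U := by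
    intro u
    have hc : Continuous (fun t : ℝ => p + t • u) := by continuity
    have hev : ∀ᶠ t in 𝓝 (0:ℝ), p + t • u ∈ U := by
      apply (hc.continuousAt (x := 0)).preimage_mem_nhds
      simpa using hU.mem_nhds hpU
    obtain ⟨δ, hδ, hball⟩ := Metric.eventually_nhds_iff.1 hev
    refine ⟨δ/2, by linarith, fun t ht => ?_⟩
    apply hball
    rw [Real.dist_eq, sub_zero]
    calc |t| ≤ δ/2 := ht
      _ < δ := by linarith
  obtain ⟨δ₁, hδ₁, hmem₁⟩ := hmem v
  obtain ⟨δ₂, hδ₂, hmem₂⟩ := hmem w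
  set γ₁ : ℝ → ℝ × ℝ := fun t => p + t • v with hγ₁
  set γ₂ : ℝ → ℝ × ℝ := fun t => p + t • w with hγ₂
  have hderiv₁ : ∀ t : ℝ, deriv γ₁ t = v := fun t => (DiscrTestAux.line_hasDerivAt p v t).deriv
  have hderiv₂ : ∀ t : ℝ, deriv γ₂ t = w := fun t => (DiscrTestAux.line_hasDerivAt p w t).deriv
  have hreg : ∀ (u : ℝ × ℝ) (δ : ℝ), 0 < δ → u ≠ 0 → (∀ t : ℝ, |t| ≤ δ → p + t • u ∈ U) →
      IsRegularPath D (fun t => p + t • u) (-δ) δ := by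
    intro u δ hδ hu hmemu
    refine ⟨by linarith, Continuous.continuousOn (by continuity), ?_, ?_⟩
    · intro t ht
      apply hUD
      apply hmemu
      rw [abs_le]
      exact ⟨ht.1, ht.2⟩
    · intro t _
      refine ⟨(DiscrTestAux.line_hasDerivAt p u t).differentiableAt, ?_⟩
      rw [(DiscrTestAux.line_hasDerivAt p u t).deriv]
      exact hu
  have hmax : IsStrictLocalMax (f ∘ γ₁) 0 := by
    have h0 : fderiv ℝ f (p + (0:ℝ) • v) v = 0 := by
      simp [hgrad]
    exact DiscrTestAux.strictMax_aux (DiscrTestAux.g_hasDerivAt hU hpU hf v) h0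
      (DiscrTestAux.g1_hasDerivAt hU hpU hf v) hQv'
  have hmin : IsStrictLocalMin (f ∘ γ₂) 0 := by
    have h0 : fderiv ℝ f (p + (0:ℝ) • w) w = 0 := by
      simp [hgrad]
    have hneg : ∀ᶠ t in 𝓝 (0:ℝ), HasDerivAt (fun s : ℝ => -(f (p + s • w)))
        (-(fderiv ℝ f (p + t • w) w)) t := by
      filter_upwards [DiscrTestAux.g_hasDerivAt hU hpU hf w] with t ht
      exact ht.neg
    have h0' : -(fderiv ℝ f (p + (0:ℝ) • w) w) = 0 := by rw [h0]; ring
    have hq' : HasDerivAt (fun t : ℝ => -(fderiv ℝ f (p + t • w) w))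
        (-(hessianForm f p w)) 0 := (DiscrTestAux.g1_hasDerivAt hU hpU hf w).neg
    have := DiscrTestAux.strictMax_aux hneg h0' hq' (by linarith)
    filter_upwards [this] with s hs
    simpa [hγ₂] using hs
  refine ⟨-δ₁, δ₁, -δ₂, δ₂, 0, 0, γ₁, γ₂,
    hreg v δ₁ hδ₁ hvne hmem₁, hreg w δ₂ hδ₂ hwne hmem₂,
    ⟨by linarith, hδ₁⟩, ⟨by linarith, hδ₂⟩, by simp [hγ₁], by simp [hγ₂], ?_, ?_, hmax, hmin⟩
  · intro c
    rw [hderiv₁, hderiv₂]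
    exact hvw c
  · intro c
    rw [hderiv₁, hderiv₂]
    exact hwv c
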